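/- The degenerate Eulerian numbers satisfy the recurrence A_λ(n,k) = ((n-k) + (n-1)λ) A_λ(n-1, k-1) + (k+1 - (n-1)λ) A_λ(n-1, k) for n ≥ 1 and 0 ≤ k ≤ n (with A_λ(m,j) = 0 for j < 0 or j > m). -/

import Mathlib

open Finset PowerSeries

/-- Degenerate falling factorial `(x)_{n,λ} = x(x-λ)⋯(x-(n-1)λ)`. -/
noncomputable def dfall (l x : ℝ) (n : ℕ) : ℝ := ∏ i ∈ Finset.range n, (x - i * l)

/-- Degenerate Eulerian number `A_λ(n,k) = ∑_{i=0}^k C(n+1,i)(-1)^i (k-i+1)_{n,λ}`. -/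
noncomputable def degEulerianNum (l : ℝ) (n k : ℕ) : ℝ :=
  ∑ i ∈ Finset.range (k+1), ((n+1).choose i : ℝ) * (-1)^i * dfall l ((k : ℝ) - i + 1) n

/-- Degenerate Eulerian polynomial `A_{n,λ}(x) = ∑_{k=0}^n A_λ(n,k) x^k`. -/
noncomputable def degEulerianPoly (l : ℝ) (n : ℕ) (x : ℝ) : ℝ :=
  ∑ k ∈ Finset.range (n+1), degEulerianNum l n k * x^k

/-- Generalized binomial coefficient `binom(y,m) = y(y-1)⋯(y-m+1)/m!`. -/
noncomputable def genBinom (y : ℝ) (m : ℕ) : ℝ :=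
  (∏ i ∈ Finset.range m, (y - i)) / m.factorial

/-- Degenerate exponential `e_λ^x(t) = ∑_k (x)_{k,λ} t^k/k!` as a formal power series. -/
noncomputable def degExp (l x : ℝ) : PowerSeries ℝ :=
  PowerSeries.mk fun k => dfall l x k / k.factorial

/-- Degenerate Stirling number of the second kind (explicit formula). -/
noncomputable def degStirling2 (l : ℝ) (n k : ℕ) : ℝ :=
  (-1)^k / k.factorial * ∑ j ∈ Finset.range (k+1), (-1)^j * (k.choose j : ℝ) * dfall l j n

lemma dfall_succ (l x : ℝ) (n : ℕ) : dfall l x (n+1) = dfall l x n * (x - n * l) := by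
  simp [dfall, Finset.prod_range_succ]

lemma key_choose (n i : ℕ) (h : i ≤ n) :
    ((i : ℝ) + 1) * ((n.choose (i+1) : ℕ) : ℝ) = ((n : ℝ) - i) * (n.choose i : ℝ) := by
  have h2 : ((n.choose (i+1) * (i+1) : ℕ) : ℝ) = ((n.choose i * (n - i) : ℕ) : ℝ) :=
    congrArg (Nat.cast : ℕ → ℝ) (Nat.choose_succ_right_eq n i)
  push_cast [Nat.cast_sub h] at h2
  linarith

/-- for `n ≥ 1` and `0 ≤ k ≤ n`,
`A_λ(n,k) = ((n-k)+(n-1)λ) A_λ(n-1,k-1) + (k+1-(n-1)λ) A_λ(n-1,k)`,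
where `A_λ(n-1,-1) = 0`. -/
theorem stmt7 (l : ℝ) (n k : ℕ) (hn : 1 ≤ n) (hk : k ≤ n) :
    degEulerianNum l n k =
      (((n : ℝ) - k) + ((n : ℝ) - 1) * l) *
        (if k = 0 then 0 else degEulerianNum l (n - 1) (k - 1)) +
      ((k : ℝ) + 1 - ((n : ℝ) - 1) * l) * degEulerianNum l (n - 1) k := by
  obtain ⟨m, rfl⟩ : ∃ m, n = m + 1 := ⟨n - 1, (Nat.succ_pred_eq_of_pos hn).symm⟩
  simp only [Nat.add_sub_cancel]
  rcases Nat.eq_zero_or_pos k with rfl | hk0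
  · simp only [if_pos rfl, mul_zero, zero_add]
    simp [degEulerianNum, dfall_succ]
    push_cast
    ring
  obtain ⟨j, rfl⟩ : ∃ j, k = j + 1 := ⟨k - 1, (Nat.succ_pred_eq_of_pos hk0).symm⟩
  rw [if_neg (Nat.succ_ne_zero j), Nat.add_sub_cancel]
  have step1 : degEulerianNum l (m+1) (j+1) =
      ∑ i ∈ Finset.range (j+2),
        ((((m+1+1).choose i : ℝ) * (-1)^i * dfall l (((j:ℝ)+1) - i + 1) m)
          * ((((j:ℝ)+1) - i + 1) - m * l)) := by
    unfold degEulerianNum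
    refine Finset.sum_congr rfl fun i _ => ?_
    have harg : ((↑(j+1):ℝ) - i + 1) = (((j:ℝ)+1) - i + 1) := by push_cast; ring
    rw [harg, dfall_succ]
    ring
  have termwise : ∀ i ∈ Finset.range (j+2),
      ((((m+1+1).choose i : ℝ) * (-1)^i * dfall l (((j:ℝ)+1) - i + 1) m)
          * ((((j:ℝ)+1) - i + 1) - m * l))
      = (((m+1).choose i : ℝ) * (-1)^i * dfall l (((j:ℝ)+1) - i + 1) m)
          * (((j:ℝ)+2) - m * l)
        + ((if i = 0 then (0:ℝ) else ((m+1).choose (i-1) : ℝ)) * (-1)^i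
            * dfall l (((j:ℝ)+1) - i + 1) m) * (((j:ℝ) - m) - m * l) := by
    intro i hi
    rcases Nat.eq_zero_or_pos i with rfl | hi0
    · norm_num
      left
      ring
    obtain ⟨p, rfl⟩ : ∃ p, i = p + 1 := ⟨i - 1, (Nat.succ_pred_eq_of_pos hi0).symm⟩
    rw [if_neg (Nat.succ_ne_zero p), Nat.add_sub_cancel]
    have hp : p ≤ m := by
      have h1 : p + 1 < j + 2 := Finset.mem_range.mp hi
      omega
    have hkey := key_choose (m+1) p (by omega)
    have hpascal : (((m+1+1).choose (p+1) : ℕ) : ℝ)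
        = ((m+1).choose (p+1) : ℝ) + ((m+1).choose p : ℝ) := by
      rw [Nat.choose_succ_succ (m+1) p]
      push_cast; ring
    have hscalar : (((m+1+1).choose (p+1) : ℕ) : ℝ) * ((((j:ℝ)+1) - (↑(p+1):ℝ) + 1) - m * l)
        = ((m+1).choose (p+1) : ℝ) * (((j:ℝ)+2) - m * l)
          + ((m+1).choose p : ℝ) * (((j:ℝ) - m) - m * l) := by
      push_cast at hpascal hkey ⊢
      linear_combination ((j:ℝ) + 1 - ((p:ℝ)+1) + 1 - (m:ℝ)*l) * hpascal - hkey
    push_cast at hscalar ⊢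
    linear_combination hscalar * ((-1:ℝ)^(p+1) * dfall l (((j:ℝ)+1) - (↑p+1) + 1) m)
  rw [step1, Finset.sum_congr rfl termwise, Finset.sum_add_distrib,
    ← Finset.sum_mul, ← Finset.sum_mul]
  have hS1 : ∑ i ∈ Finset.range (j+2),
      ((m+1).choose i : ℝ) * (-1)^i * dfall l (((j:ℝ)+1) - i + 1) m
      = degEulerianNum l m (j+1) := by
    unfold degEulerianNum
    refine Finset.sum_congr rfl fun i _ => ?_
    have harg : (((j:ℝ)+1) - i + 1) = ((↑(j+1):ℝ) - i + 1) := by push_cast; ring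
    rw [harg]
  have hS2 : ∑ i ∈ Finset.range (j+2),
      (if i = 0 then (0:ℝ) else ((m+1).choose (i-1) : ℝ)) * (-1)^i
        * dfall l (((j:ℝ)+1) - i + 1) m
      = - degEulerianNum l m j := by
    rw [Finset.sum_range_succ' (fun i => (if i = 0 then (0:ℝ) else ((m+1).choose (i-1) : ℝ))
      * (-1)^i * dfall l (((j:ℝ)+1) - i + 1) m) (j+1)]
    norm_num
    unfold degEulerianNum
    rw [← Finset.sum_neg_distrib]
    refine Finset.sum_congr rfl fun i _ => ?_
    ring
  rw [hS1, hS2]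
  push_cast
  ring
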